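/- Let A satisfy (H1) with positive eigenvalues ω_1 < ω_2 < … , ω_k → +∞, and associated mutually orthogonal eigenspaces Z_k spanning H. Let 0 < β < √ω_1, set λ_k = √(ω_k − β²), and let α ≠ 0. Consider the partially coupled system u'' + Au + 2βu' = 0, v'' + Av + αu = 0. If u(0) = u⁰ ∈ Z_1 and u'(0) = u¹ ∈ Z_1, then u(t) = e^{−βt}[u⁰ cos(λ_1 t) + ((u¹ + βu⁰)/λ_1) sin(λ_1 t)] ∈ Z_1 for all t ≥ 0; writing v(t) = v_1(t) + v_2(t) with v_1(t) ∈ Z_1 and v_2(t) ∈ Z_1^⊥, the component v_2 satisfies v_2'' + Av_2 = 0, and hence E(v_2(t), v_2'(t)) := ½(|v_2'(t)|² + ⟨Av_2(t), v_2(t)⟩) is constant in t. In particular, if v(0) ∉ Z_1 or v'(0) ∉ Z_1, then E(v_2(t), v_2'(t)) = E(v_2(0), v_2'(0)) > 0 for all t ≥ 0, so the system is not stabilizable (its energy does not tend to 0). -/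

import Mathlib

open RealInnerProductSpace Filter
open Set


noncomputable def dcoef1 (β l t : ℝ) : ℝ := Real.exp (-β*t) * Real.cos (l*t)
noncomputable def dcoef2 (β l t : ℝ) : ℝ := Real.exp (-β*t) * Real.sin (l*t) / l
noncomputable def dcoef1' (β l t : ℝ) : ℝ :=
  -β * dcoef1 β l t - l * (Real.exp (-β*t) * Real.sin (l*t))
noncomputable def dcoef2' (β l t : ℝ) : ℝ :=
  Real.exp (-β*t) * Real.cos (l*t) - β * dcoef2 β l t

lemma hasDerivAt_exp_aux (β t : ℝ) :
    HasDerivAt (fun s : ℝ => Real.exp (-β*s)) (-β * Real.exp (-β*t)) t := by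
  have h : HasDerivAt (fun s : ℝ => -β*s) (-β) t := by
    simpa using (hasDerivAt_id t).const_mul (-β)
  simpa [mul_comm] using h.exp

lemma hasDerivAt_cos_aux (l t : ℝ) :
    HasDerivAt (fun s : ℝ => Real.cos (l*s)) (-(l * Real.sin (l*t))) t := by
  have h : HasDerivAt (fun s : ℝ => l*s) l t := by
    simpa using (hasDerivAt_id t).const_mul l
  simpa [mul_comm] using h.cos

lemma hasDerivAt_sin_aux (l t : ℝ) :
    HasDerivAt (fun s : ℝ => Real.sin (l*s)) (l * Real.cos (l*t)) t := by
  have h : HasDerivAt (fun s : ℝ => l*s) l t := by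
    simpa using (hasDerivAt_id t).const_mul l
  simpa [mul_comm] using h.sin

lemma hasDerivAt_dcoef1 (β l t : ℝ) :
    HasDerivAt (dcoef1 β l) (dcoef1' β l t) t := by
  have h := (hasDerivAt_exp_aux β t).mul (hasDerivAt_cos_aux l t)
  convert h using 1
  · rfl
  · rfl
  · rfl
  simp only [dcoef1', dcoef1]; ring

lemma hasDerivAt_dcoef2 (β l : ℝ) (hl : l ≠ 0) (t : ℝ) :
    HasDerivAt (dcoef2 β l) (dcoef2' β l t) t := by
  have h := ((hasDerivAt_exp_aux β t).mul (hasDerivAt_sin_aux l t)).div_const l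
  convert h using 1
  · rfl
  · rfl
  · rfl
  simp only [dcoef2', dcoef2]
  field_simp
  ring

lemma hasDerivAt_dcoef1' (β l t : ℝ) :
    HasDerivAt (dcoef1' β l) (-((l^2+β^2) * dcoef1 β l t) - (2*β) * dcoef1' β l t) t := by
  have h1 := (hasDerivAt_dcoef1 β l t).const_mul (-β)
  have h2 := ((hasDerivAt_exp_aux β t).mul (hasDerivAt_sin_aux l t)).const_mul l
  have h := h1.sub h2
  convert h using 1
  · rfl
  · rfl
  · rfl
  simp only [dcoef1', dcoef1]; ring

lemma hasDerivAt_dcoef2' (β l : ℝ) (hl : l ≠ 0) (t : ℝ) :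
    HasDerivAt (dcoef2' β l) (-((l^2+β^2) * dcoef2 β l t) - (2*β) * dcoef2' β l t) t := by
  have h1 := (hasDerivAt_exp_aux β t).mul (hasDerivAt_cos_aux l t)
  have h2 := (hasDerivAt_dcoef2 β l hl t).const_mul β
  have h := h1.sub h2
  convert h using 1
  · rfl
  · rfl
  · rfl
  simp only [dcoef2', dcoef2, dcoef1', dcoef1]
  field_simp
  ring

section
variable {H : Type*} [NormedAddCommGroup H] [InnerProductSpace ℝ H] [CompleteSpace H]

lemma energy_ge (dom : Set H) (A : H → H) (ω : ℕ → ℝ) (Z : ℕ → Submodule ℝ H)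
    (hω_mono : StrictMono ω) (hω_pos : 0 < ω 1)
    (hZ : ∀ k, 1 ≤ k → ∀ x ∈ Z k, x ∈ dom ∧ A x = ω k • x)
    (hdense : Dense ((⨆ k ∈ Set.Ici 1, Z k : Submodule ℝ H) : Set H))
    (hlin : ∀ u ∈ dom, ∀ v ∈ dom, ∀ a b : ℝ,
      a • u + b • v ∈ dom ∧ A (a • u + b • v) = a • A u + b • A v)
    (hsymm : ∀ u ∈ dom, ∀ v ∈ dom, ⟪A u, v⟫ = ⟪u, A v⟫)
    (hcoer : ∀ u ∈ dom, ω 1 * ‖u‖ ^ 2 ≤ ⟪A u, u⟫)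
    (w w' : ℝ → H) (hwdom : ∀ t, w t ∈ dom)
    (hw : ∀ t, HasDerivAt w (w' t) t) (hw' : ∀ t, HasDerivAt w' (-A (w t)) t) :
    ∀ t : ℝ, ‖w' 0‖^2 + ⟪A (w 0), w 0⟫ ≤ ‖w' t‖^2 + ⟪A (w t), w t⟫ := by
  have h0dom : (0:H) ∈ dom := (hZ 1 le_rfl 0 (Z 1).zero_mem).1
  have hA0 : A (0:H) = 0 := by
    have := (hZ 1 le_rfl 0 (Z 1).zero_mem).2
    simpa using this
  have hAadd : ∀ x ∈ dom, ∀ y ∈ dom, (x + y) ∈ dom ∧ A (x + y) = A x + A y := by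
    intro x hx y hy
    have := hlin x hx y hy 1 1
    simpa using this
  have hAsub : ∀ x ∈ dom, ∀ y ∈ dom, (x - y) ∈ dom ∧ A (x - y) = A x - A y := by
    intro x hx y hy
    have := hlin x hx y hy 1 (-1)
    simp only [one_smul, neg_one_smul, ← sub_eq_add_neg] at this
    exact this
  have hωk : ∀ k, 1 ≤ k → 0 < ω k := fun k hk => lt_of_lt_of_le hω_pos (hω_mono.monotone hk)
  have hQ0 : ∀ x ∈ dom, 0 ≤ ⟪A x, x⟫ := fun x hx => le_trans (by positivity) (hcoer x hx)
  -- the class of "smooth mode solutions" data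
  set Good : H → H → Prop := fun x p => ∃ z z' : ℝ → H,
    z 0 = x ∧ z' 0 = p ∧ (∀ t, z t ∈ dom) ∧ (∀ t, z' t ∈ dom) ∧
    (∀ t, HasDerivAt z (z' t) t) ∧ (∀ t, HasDerivAt z' (-A (z t)) t) ∧
    (∀ t, HasDerivAt (fun s => A (z s)) (A (z' t)) t) with hGoodDef
  have gzero : Good 0 0 := by
    refine ⟨fun _ => 0, fun _ => 0, rfl, rfl, fun _ => h0dom, fun _ => h0dom,
      fun t => hasDerivAt_const _ _, ?_, ?_⟩
    · intro t; simpa [hA0] using (hasDerivAt_const t (0:H))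
    · intro t; simpa [hA0] using (hasDerivAt_const t (0:H))
  have gadd : ∀ x₁ p₁ x₂ p₂, Good x₁ p₁ → Good x₂ p₂ → Good (x₁ + x₂) (p₁ + p₂) := by
    rintro x₁ p₁ x₂ p₂ ⟨z₁, z₁', e₁, e₁', d₁, d₁', hd₁, hd₁', hA₁⟩
      ⟨z₂, z₂', e₂, e₂', d₂, d₂', hd₂, hd₂', hA₂⟩
    refine ⟨fun t => z₁ t + z₂ t, fun t => z₁' t + z₂' t, by simp only [e₁, e₂], by simp only [e₁', e₂'],
      fun t => (hAadd _ (d₁ t) _ (d₂ t)).1, fun t => (hAadd _ (d₁' t) _ (d₂' t)).1,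
      fun t => (hd₁ t).add (hd₂ t), ?_, ?_⟩
    · intro t
      have h := (hd₁' t).add (hd₂' t)
      rw [(hAadd _ (d₁ t) _ (d₂ t)).2]
      convert h using 1
      · rfl
      abel
    · intro t
      have h := (hA₁ t).add (hA₂ t)
      have he : (fun s => A (z₁ s + z₂ s)) = fun s => A (z₁ s) + A (z₂ s) := by
        funext s; exact (hAadd _ (d₁ s) _ (d₂ s)).2
      rw [he, (hAadd _ (d₁' t) _ (d₂' t)).2]
      exact h
  have geig : ∀ k, 1 ≤ k → ∀ y ∈ Z k, Good y 0 ∧ Good 0 y := by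
    intro k hk y hy
    set μ := Real.sqrt (ω k) with hμ
    have hμpos : 0 < μ := Real.sqrt_pos.mpr (hωk k hk)
    have hμsq : μ^2 = ω k := Real.sq_sqrt (hωk k hk).le
    have hmem : ∀ c : ℝ, (c • y) ∈ Z k := fun c => (Z k).smul_mem c hy
    have hdomc : ∀ c : ℝ, (c • y) ∈ dom := fun c => (hZ k hk _ (hmem c)).1
    have hAc : ∀ c : ℝ, A (c • y) = (ω k * c) • y := by
      intro c
      rw [(hZ k hk _ (hmem c)).2, smul_smul]
    constructor
    · refine ⟨fun t => dcoef1 0 μ t • y, fun t => dcoef1' 0 μ t • y, ?_, ?_,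
        fun t => hdomc _, fun t => hdomc _,
        fun t => (hasDerivAt_dcoef1 0 μ t).smul_const y, ?_, ?_⟩
      · simp [dcoef1]
      · simp [dcoef1', dcoef1]
      · intro t
        have h := (hasDerivAt_dcoef1' 0 μ t).smul_const y
        convert h using 1
        rw [hAc, ← neg_smul]
        congr 1
        rw [← hμsq]; ring
      · intro t
        have h := ((hasDerivAt_dcoef1 0 μ t).const_mul (ω k)).smul_const y
        have he : (fun s => A (dcoef1 0 μ s • y)) = fun s => (ω k * dcoef1 0 μ s) • y := by
          funext s; exact hAc _
        rw [he, hAc]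
        exact h
    · refine ⟨fun t => dcoef2 0 μ t • y, fun t => dcoef2' 0 μ t • y, ?_, ?_,
        fun t => hdomc _, fun t => hdomc _,
        fun t => (hasDerivAt_dcoef2 0 μ hμpos.ne' t).smul_const y, ?_, ?_⟩
      · simp [dcoef2]
      · simp [dcoef2', dcoef2]
      · intro t
        have h := (hasDerivAt_dcoef2' 0 μ hμpos.ne' t).smul_const y
        convert h using 1
        rw [hAc, ← neg_smul]
        congr 1
        rw [← hμsq]; ring
      · intro t
        have h := ((hasDerivAt_dcoef2 0 μ hμpos.ne' t).const_mul (ω k)).smul_const y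
        have he : (fun s => A (dcoef2 0 μ s • y)) = fun s => (ω k * dcoef2 0 μ s) • y := by
          funext s; exact hAc _
        rw [he, hAc]
        exact h
  -- induction over the dense span
  have ind : ∀ (C : H → Prop), (∀ k, 1 ≤ k → ∀ y ∈ Z k, C y) → C 0 →
      (∀ a b, C a → C b → C (a+b)) →
      ∀ x ∈ (⨆ k ∈ Set.Ici 1, Z k : Submodule ℝ H), C x := by
    intro C hmem h0 hadd x hx
    refine Submodule.iSup_induction (p := fun k => ⨆ _ : k ∈ Set.Ici 1, Z k) (motive := C) hx ?_ h0 hadd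
    intro i y hy
    have hy' : y ∈ ⨆ _ : i ∈ Set.Ici 1, Z i := hy
    by_cases hi : i ∈ Set.Ici 1
    · rw [iSup_pos hi] at hy'
      exact hmem i hi y hy'
    · rw [iSup_neg hi] at hy'
      rw [(Submodule.mem_bot ℝ).1 hy']
      exact h0
  have gspanP : ∀ p ∈ (⨆ k ∈ Set.Ici 1, Z k : Submodule ℝ H), Good 0 p := by
    refine ind (fun p => Good 0 p) (fun k hk y hy => (geig k hk y hy).2) gzero ?_
    intro a b ha hb
    simpa using gadd 0 a 0 b ha hb
  have gspanA : ∀ yy ∈ (⨆ k ∈ Set.Ici 1, Z k : Submodule ℝ H),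
      ∃ x, x ∈ dom ∧ A x = yy ∧ Good x 0 := by
    refine ind (fun yy => ∃ x, x ∈ dom ∧ A x = yy ∧ Good x 0) ?_ ⟨0, h0dom, hA0, gzero⟩ ?_
    · intro k hk y hy
      refine ⟨(ω k)⁻¹ • y, (hZ k hk _ ((Z k).smul_mem _ hy)).1, ?_,
        (geig k hk _ ((Z k).smul_mem _ hy)).1⟩
      rw [(hZ k hk _ ((Z k).smul_mem _ hy)).2, smul_smul, mul_inv_cancel₀ (hωk k hk).ne', one_smul]
    · rintro a b ⟨xa, da, ea, ga⟩ ⟨xb, db, eb, gb⟩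
      refine ⟨xa + xb, (hAadd _ da _ db).1, ?_, by simpa using gadd xa 0 xb 0 ga gb⟩
      rw [(hAadd _ da _ db).2, ea, eb]
  -- main ε-argument
  intro t
  have main : ∀ ε : ℝ, 0 < ε →
      ‖w' 0‖^2 + ⟪A (w 0), w 0⟫ ≤ ‖w' t‖^2 + ⟪A (w t), w t⟫ + ε := by
    intro ε hε
    set c : ℝ := 1 + 1/ω 1 with hc
    have hc0 : 0 < c := by rw [hc]; positivity
    set δ : ℝ := min 1 (ε / c) with hδ
    have hδpos : 0 < δ := lt_min one_pos (div_pos hε hc0)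
    have hδ1 : δ ≤ 1 := min_le_left _ _
    have hδ2 : δ ≤ ε / c := min_le_right _ _
    -- choose approximations of `w' 0` and `A (w 0)` in the dense span
    obtain ⟨p, hp⟩ := Metric.dense_iff.mp hdense (w' 0) δ hδpos
    obtain ⟨yy, hyy⟩ := Metric.dense_iff.mp hdense (A (w 0)) δ hδpos
    obtain ⟨x, hxdom, hAx, hgx⟩ := gspanA yy hyy.2
    have hgood : Good x p := by
      have := gadd x 0 0 p hgx (gspanP p hp.2)
      simpa using this
    obtain ⟨z, z', hz0, hz'0, hdz, hdz', hDz, hDz', hAz⟩ := hgood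
    -- the mixed quantity is conserved
    have hg : ∀ s, HasDerivAt (fun r => 2*⟪w' r, z' r⟫ + 2*⟪w r, A (z r)⟫
        - ⟪z' r, z' r⟫ - ⟪z r, A (z r)⟫) 0 s := by
      intro s
      have h1 := (hw' s).inner (𝕜 := ℝ) (hDz' s)
      have h2 := (hw s).inner (𝕜 := ℝ) (hAz s)
      have h3 := (hDz' s).inner (𝕜 := ℝ) (hDz' s)
      have h4 := (hDz s).inner (𝕜 := ℝ) (hAz s)
      have h := (((h1.const_mul (2:ℝ)).add (h2.const_mul (2:ℝ))).sub h3).sub h4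
      convert h using 1
      · rfl
      · rfl
      · rfl
      simp only [inner_neg_left, inner_neg_right]
      have s1 : ⟪A (w s), z' s⟫ = ⟪w s, A (z' s)⟫ := hsymm _ (hwdom s) _ (hdz' s)
      have s2 : ⟪A (z s), z' s⟫ = ⟪z s, A (z' s)⟫ := hsymm _ (hdz s) _ (hdz' s)
      have c1 : ⟪w' s, A (z s)⟫ = ⟪A (z s), w' s⟫ := real_inner_comm _ _
      have c2 : ⟪A (w s), z' s⟫ = ⟪z' s, A (w s)⟫ := real_inner_comm _ _
      have c3 : ⟪A (z s), z' s⟫ = ⟪z' s, A (z s)⟫ := real_inner_comm _ _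
      linarith
    have hconst : (fun r : ℝ => 2*⟪w' r, z' r⟫ + 2*⟪w r, A (z r)⟫
        - ⟪z' r, z' r⟫ - ⟪z r, A (z r)⟫) t
        = (fun r : ℝ => 2*⟪w' r, z' r⟫ + 2*⟪w r, A (z r)⟫
        - ⟪z' r, z' r⟫ - ⟪z r, A (z r)⟫) 0 := by
      exact is_const_of_deriv_eq_zero (fun s => (hg s).differentiableAt)
        (fun s => (hg s).deriv) t 0
    simp only at hconst
    -- expansion of the shifted energy
    have expand : ∀ s : ℝ, ‖w' s - z' s‖^2 + ⟪A (w s - z s), w s - z s⟫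
        = ‖w' s‖^2 + ⟪A (w s), w s⟫ - (2*⟪w' s, z' s⟫ + 2*⟪w s, A (z s)⟫
          - ⟪z' s, z' s⟫ - ⟪z s, A (z s)⟫) := by
      intro s
      rw [(hAsub _ (hwdom s) _ (hdz s)).2, norm_sub_sq_real]
      simp only [inner_sub_left, inner_sub_right]
      have c1 : ⟪A (w s), z s⟫ = ⟪w s, A (z s)⟫ := hsymm _ (hwdom s) _ (hdz s)
      have c2 : ⟪A (z s), w s⟫ = ⟪w s, A (z s)⟫ := real_inner_comm _ _
      have c3 : ⟪A (z s), z s⟫ = ⟪z s, A (z s)⟫ := real_inner_comm _ _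
      have c4 : ⟪z' s, z' s⟫ = ‖z' s‖^2 := real_inner_self_eq_norm_sq _
      linarith
    -- lower bound of the energy at time `t` by the conserved mixed quantity
    have key1 : 2*⟪w' t, z' t⟫ + 2*⟪w t, A (z t)⟫ - ⟪z' t, z' t⟫ - ⟪z t, A (z t)⟫
        ≤ ‖w' t‖^2 + ⟪A (w t), w t⟫ := by
      have hpos : 0 ≤ ‖w' t - z' t‖^2 + ⟪A (w t - z t), w t - z t⟫ :=
        add_nonneg (by positivity) (hQ0 _ (hAsub _ (hwdom t) _ (hdz t)).1)
      have hexp := expand t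
      linarith
    -- the error at time `0` is small
    have hAxnorm : ‖A (w 0 - x)‖ ≤ δ := by
      rw [(hAsub _ (hwdom 0) _ hxdom).2, hAx]
      have := Metric.mem_ball.mp hyy.1
      rw [dist_eq_norm] at this
      rw [← norm_neg]
      simpa [neg_sub] using this.le
    have hxnorm : ‖w 0 - x‖ ≤ δ / ω 1 := by
      rcases eq_or_lt_of_le (norm_nonneg (w 0 - x)) with h | h
      · rw [← h]; positivity
      · rw [le_div_iff₀ hω_pos]
        have h1 : ω 1 * ‖w 0 - x‖^2 ≤ ⟪A (w 0 - x), w 0 - x⟫ :=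
          hcoer _ (hAsub _ (hwdom 0) _ hxdom).1
        have h2 : ⟪A (w 0 - x), w 0 - x⟫ ≤ ‖A (w 0 - x)‖ * ‖w 0 - x‖ := real_inner_le_norm _ _
        have h3 : ‖A (w 0 - x)‖ * ‖w 0 - x‖ ≤ δ * ‖w 0 - x‖ :=
          mul_le_mul_of_nonneg_right hAxnorm (norm_nonneg _)
        nlinarith
    have hpnorm : ‖w' 0 - p‖ ≤ δ := by
      have := Metric.mem_ball.mp hp.1
      rw [dist_eq_norm] at this
      rw [← norm_neg]
      simpa [neg_sub] using this.le
    have herr : ‖w' 0 - z' 0‖^2 + ⟪A (w 0 - z 0), w 0 - z 0⟫ ≤ ε := by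
      rw [hz0, hz'0]
      have e1 : ‖w' 0 - p‖^2 ≤ δ^2 := by nlinarith [norm_nonneg (w' 0 - p)]
      have e2 : ⟪A (w 0 - x), w 0 - x⟫ ≤ δ * (δ / ω 1) := by
        have h2 : ⟪A (w 0 - x), w 0 - x⟫ ≤ ‖A (w 0 - x)‖ * ‖w 0 - x‖ := real_inner_le_norm _ _
        have : ‖A (w 0 - x)‖ * ‖w 0 - x‖ ≤ δ * (δ / ω 1) := by
          apply mul_le_mul hAxnorm hxnorm (norm_nonneg _) hδpos.le
        linarith
      have e3 : δ^2 + δ * (δ / ω 1) = δ^2 * c := by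
        rw [hc]; field_simp
      have e4 : δ^2 * c ≤ δ * c := by
        have : δ^2 ≤ δ := by nlinarith
        exact mul_le_mul_of_nonneg_right this hc0.le
      have e5 : δ * c ≤ ε := (le_div_iff₀ hc0).mp hδ2
      calc ‖w' 0 - p‖^2 + ⟪A (w 0 - x), w 0 - x⟫ ≤ δ^2 + δ * (δ / ω 1) := by linarith
        _ = δ^2 * c := e3
        _ ≤ δ * c := e4
        _ ≤ ε := e5
    have hexp0 := expand 0
    linarith [key1, hconst, hexp0, herr]
  by_contra hcon
  push_neg at hcon
  have := main ((‖w' 0‖^2 + ⟪A (w 0), w 0⟫ - (‖w' t‖^2 + ⟪A (w t), w t⟫))/2) (by linarith)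
  linarith

end


lemma ode2_zero (b c : ℝ) (f f' : ℝ → ℝ)
    (hf : ∀ t, HasDerivAt f (f' t) t)
    (hf' : ∀ t, HasDerivAt f' (-(c * f t) - b * f' t) t)
    (h0 : f 0 = 0) (h1 : f' 0 = 0) : ∀ t, f t = 0 := by
  set K : NNReal := (1 + |c| + |b|).toNNReal with hK
  set V : ℝ → ℝ × ℝ → ℝ × ℝ := fun _ p => (p.2, -(c * p.1) - b * p.2) with hV
  have hKc : (K : ℝ) = 1 + |c| + |b| := by
    rw [hK, Real.coe_toNNReal]; positivity
  have hlip : ∀ t, LipschitzWith K (V t) := by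
    intro t
    apply LipschitzWith.of_dist_le_mul
    intro p q
    rw [Prod.dist_eq, Prod.dist_eq, hKc]
    simp only [hV, Real.dist_eq]
    set M := max |p.1 - q.1| |p.2 - q.2| with hM
    have h1' : |p.1 - q.1| ≤ M := le_max_left _ _
    have h2' : |p.2 - q.2| ≤ M := le_max_right _ _
    have hM0 : 0 ≤ M := le_trans (abs_nonneg _) h1'
    apply max_le
    · calc |p.2 - q.2| ≤ M := h2'
        _ ≤ (1 + |c| + |b|) * M := by nlinarith [abs_nonneg c, abs_nonneg b]
    · have : -(c * p.1) - b * p.2 - (-(c * q.1) - b * q.2) = -(c * (p.1 - q.1)) - b * (p.2 - q.2) := by ring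
      rw [this]
      calc |(-(c * (p.1 - q.1)) - b * (p.2 - q.2))| ≤ |c * (p.1 - q.1)| + |b * (p.2 - q.2)| := by
            rw [sub_eq_add_neg]
            refine (abs_add_le _ _).trans ?_
            rw [abs_neg, abs_neg]
        _ = |c| * |p.1 - q.1| + |b| * |p.2 - q.2| := by rw [abs_mul, abs_mul]
        _ ≤ |c| * M + |b| * M := by
            gcongr
        _ ≤ (1 + |c| + |b|) * M := by nlinarith
  intro t
  set F : ℝ → ℝ × ℝ := fun s => (f s, f' s) with hF
  have hder : ∀ s, HasDerivAt F (V s (F s)) s := fun s => (hf s).prodMk (hf' s)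
  have hzero : ∀ s : ℝ, HasDerivAt (fun _ : ℝ => ((0 : ℝ), (0 : ℝ))) (V s ((0 : ℝ), (0 : ℝ))) s := by
    intro s
    have : V s ((0:ℝ), (0:ℝ)) = (0, 0) := by simp [hV]
    rw [this]
    exact hasDerivAt_const _ _
  have key : EqOn F (fun _ => ((0:ℝ), (0:ℝ))) (Icc (-(|t| + 1)) (|t| + 1)) := by
    apply ODE_solution_unique_of_mem_Icc (s := fun _ => univ)
      (fun s _ => (hlip s).lipschitzOnWith) (t₀ := 0)
    · constructor
      · nlinarith [abs_nonneg t]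
      · nlinarith [abs_nonneg t]
    · exact fun s _ => ((hder s).continuousAt.continuousWithinAt)
    · exact fun s _ => hder s
    · exact fun _ _ => trivial
    · exact continuousOn_const
    · exact fun s _ => hzero s
    · exact fun _ _ => trivial
    · simp [hF, h0, h1]
  have ht : t ∈ Icc (-(|t| + 1)) (|t| + 1) := by
    constructor <;> cases' abs_cases t with h h <;> linarith [h.1]
  have := key ht
  simpa [hF] using congrArg Prod.fst this

section
variable {H : Type*} [NormedAddCommGroup H] [InnerProductSpace ℝ H] [CompleteSpace H]

lemma ind_aux (Z : ℕ → Submodule ℝ H) (C : H → Prop)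
    (hmem : ∀ k, 1 ≤ k → ∀ y ∈ Z k, C y) (h0 : C 0)
    (hadd : ∀ a b, C a → C b → C (a+b)) :
    ∀ x ∈ (⨆ k ∈ Set.Ici 1, Z k : Submodule ℝ H), C x := by
  intro x hx
  refine Submodule.iSup_induction (p := fun k => ⨆ _ : k ∈ Set.Ici 1, Z k) (motive := C) hx ?_ h0 hadd
  intro i y hy
  have hy' : y ∈ ⨆ _ : i ∈ Set.Ici 1, Z i := hy
  by_cases hi : i ∈ Set.Ici 1
  · rw [iSup_pos hi] at hy'
    exact hmem i hi y hy'
  · rw [iSup_neg hi] at hy'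
    rw [(Submodule.mem_bot ℝ).1 hy']
    exact h0

end
/-- **Remark (non-stabilizability of the partially coupled system).**
`A` satisfies (H1) with positive eigenvalues `ω 1 < ω 2 < …`, `ω k → +∞`, and
mutually orthogonal eigenspaces `Z k` whose span is dense in `H`.  With
`0 < β < √(ω 1)`, `λ_k = √(ω k − β²)` and `α ≠ 0`, consider the partially coupled
system `u'' + Au + 2βu' = 0`, `v'' + Av + αu = 0`.
If `u(0), u'(0) ∈ Z 1`, then:
(1) `u(t) = e^{−βt}[cos(λ₁t) u(0) + ((u'(0) + βu(0))/λ₁) sin(λ₁t)] ∈ Z 1` for `t ≥ 0`;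
(2) writing `v = v₁ + v₂` with `v₁(t) ∈ Z 1`, `v₂(t) ∈ Z 1ᗮ`, the component `v₂`
satisfies `v₂'' + Av₂ = 0`;
(3) hence `E(v₂, v₂') = ½(|v₂'|² + ⟨Av₂, v₂⟩)` is constant in time;
(4) if `v(0) ∉ Z 1` or `v'(0) ∉ Z 1`, then `E(v₂(t), v₂'(t)) = E(v₂(0), v₂'(0)) > 0`
for all `t ≥ 0`, so the energy does not tend to `0`: the system is not stabilizable. -/
theorem partially_coupled_not_stabilizable
    {H : Type*} [NormedAddCommGroup H] [InnerProductSpace ℝ H] [CompleteSpace H]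
    (dom : Set H) (A : H → H) (ω : ℕ → ℝ) (Z : ℕ → Submodule ℝ H)
    (hω_mono : StrictMono ω) (hω_tendsto : Tendsto ω atTop atTop)
    (hω_pos : 0 < ω 1)
    (hZ : ∀ k, 1 ≤ k → ∀ x ∈ Z k, x ∈ dom ∧ A x = ω k • x)
    (horth : ∀ k l, 1 ≤ k → 1 ≤ l → k ≠ l → ∀ x ∈ Z k, ∀ y ∈ Z l, ⟪x, y⟫ = 0)
    (hdense : Dense ((⨆ k ∈ Set.Ici 1, Z k : Submodule ℝ H) : Set H))
    (hlin : ∀ u ∈ dom, ∀ v ∈ dom, ∀ a b : ℝ,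
      a • u + b • v ∈ dom ∧ A (a • u + b • v) = a • A u + b • A v)
    (hsymm : ∀ u ∈ dom, ∀ v ∈ dom, ⟪A u, v⟫ = ⟪u, A v⟫)
    (hcoer : ∀ u ∈ dom, ω 1 * ‖u‖ ^ 2 ≤ ⟪A u, u⟫)
    (β : ℝ) (hβ0 : 0 < β) (hβ1 : β < Real.sqrt (ω 1))
    (lam : ℕ → ℝ) (hlam : ∀ k, lam k = Real.sqrt (ω k - β ^ 2))
    (α : ℝ) (hα : α ≠ 0)
    -- the solution `(u, u', v, v')` of `u'' + Au + 2βu' = 0`, `v'' + Av + αu = 0`: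
    (u u' v v' : ℝ → H)
    (hu_dom : ∀ t, u t ∈ dom) (hv_dom : ∀ t, v t ∈ dom)
    (hu : ∀ t, HasDerivAt u (u' t) t)
    (hu' : ∀ t, HasDerivAt u' (-A (u t) - (2 * β) • u' t) t)
    (hv : ∀ t, HasDerivAt v (v' t) t)
    (hv' : ∀ t, HasDerivAt v' (-A (v t) - α • u t) t)
    (hu0 : u 0 ∈ Z 1) (hu1 : u' 0 ∈ Z 1)
    -- the orthogonal splitting `v = v₁ + v₂`, `v' = v₁' + v₂'` along `Z 1 ⊕ Z 1ᗮ`: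
    (v₁ v₂ v₁' v₂' : ℝ → H)
    (hsplit : ∀ t, v t = v₁ t + v₂ t ∧ v' t = v₁' t + v₂' t)
    (hv₁Z : ∀ t, v₁ t ∈ Z 1) (hv₂Z : ∀ t, v₂ t ∈ (Z 1)ᗮ)
    (hv₁'Z : ∀ t, v₁' t ∈ Z 1) (hv₂'Z : ∀ t, v₂' t ∈ (Z 1)ᗮ)
    (hdv₁ : ∀ t, HasDerivAt v₁ (v₁' t) t) (hdv₂ : ∀ t, HasDerivAt v₂ (v₂' t) t)
    (hv₂dom : ∀ t, v₂ t ∈ dom) :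
    -- (1) explicit formula for `u`, which stays in `Z 1`:
    (∀ t : ℝ, 0 ≤ t →
      u t = Real.exp (-β * t) •
          (Real.cos (lam 1 * t) • u 0 +
            (Real.sin (lam 1 * t) / lam 1) • (u' 0 + β • u 0)) ∧
        u t ∈ Z 1) ∧
    -- (2) `v₂'' + A v₂ = 0`:
    (∀ t : ℝ, HasDerivAt v₂' (-A (v₂ t)) t) ∧
    -- (3) conservation of the energy of `v₂`:
    (∀ t : ℝ, 0 ≤ t →
      (‖v₂' t‖ ^ 2 + ⟪A (v₂ t), v₂ t⟫) / 2 =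
        (‖v₂' 0‖ ^ 2 + ⟪A (v₂ 0), v₂ 0⟫) / 2) ∧
    -- (4) non-stabilizability:
    ((v 0 ∉ Z 1 ∨ v' 0 ∉ Z 1) → ∀ t : ℝ, 0 ≤ t →
      0 < (‖v₂' t‖ ^ 2 + ⟪A (v₂ t), v₂ t⟫) / 2) := by
  -- ## basic setup
  have hβsq : β^2 < ω 1 := by
    nlinarith [Real.sq_sqrt hω_pos.le, Real.sqrt_nonneg (ω 1), hβ1, hβ0]
  set l := lam 1 with hldef
  have hl2 : l^2 = ω 1 - β^2 := by rw [hldef, hlam]; exact Real.sq_sqrt (by linarith)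
  have hlpos : 0 < l := by rw [hldef, hlam]; exact Real.sqrt_pos.mpr (by linarith)
  have hω1eq : ω 1 = l^2 + β^2 := by linarith
  have hAadd : ∀ x ∈ dom, ∀ y ∈ dom, (x + y) ∈ dom ∧ A (x + y) = A x + A y := by
    intro x hx y hy
    have := hlin x hx y hy 1 1
    simpa using this
  -- ## the explicit damped mode solution `W`
  set W : ℝ → H := fun t => dcoef1 β l t • u 0 + dcoef2 β l t • (u' 0 + β • u 0) with hWdef
  set W' : ℝ → H := fun t => dcoef1' β l t • u 0 + dcoef2' β l t • (u' 0 + β • u 0) with hW'def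
  have hbbZ : u' 0 + β • u 0 ∈ Z 1 := (Z 1).add_mem hu1 ((Z 1).smul_mem β hu0)
  have hWZ : ∀ t, W t ∈ Z 1 := fun t =>
    (Z 1).add_mem ((Z 1).smul_mem _ hu0) ((Z 1).smul_mem _ hbbZ)
  have hW'Z : ∀ t, W' t ∈ Z 1 := fun t =>
    (Z 1).add_mem ((Z 1).smul_mem _ hu0) ((Z 1).smul_mem _ hbbZ)
  have hdW : ∀ t, HasDerivAt W (W' t) t := fun t =>
    ((hasDerivAt_dcoef1 β l t).smul_const (u 0)).add
      ((hasDerivAt_dcoef2 β l hlpos.ne' t).smul_const (u' 0 + β • u 0))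
  have hdW' : ∀ t, HasDerivAt W' (-(ω 1) • W t - (2*β) • W' t) t := by
    intro t
    have h := ((hasDerivAt_dcoef1' β l t).smul_const (u 0)).add
      ((hasDerivAt_dcoef2' β l hlpos.ne' t).smul_const (u' 0 + β • u 0))
    convert h using 1
    · rfl
    rw [hω1eq, hWdef, hW'def]
    match_scalars <;> ring
  have hW0 : W 0 = u 0 := by
    rw [hWdef]
    simp [dcoef1, dcoef2]
  have hW'0 : W' 0 = u' 0 := by
    rw [hW'def]
    simp only [dcoef1', dcoef2', dcoef1, dcoef2]
    simp [Real.exp_zero, Real.cos_zero, Real.sin_zero]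
  -- ## uniqueness: `u = W`
  have horthW : ∀ k, 1 ≤ k → ∀ y ∈ Z k, ∀ s : ℝ, ⟪u s - W s, y⟫ = 0 := by
    intro k hk y hy
    have hydom : y ∈ dom := (hZ k hk y hy).1
    have hAy : A y = ω k • y := (hZ k hk y hy).2
    have hdF : ∀ s, HasDerivAt (fun r => ⟪u r - W r, y⟫) (⟪u' s - W' s, y⟫) s := by
      intro s
      have h := ((hu s).sub (hdW s)).inner (𝕜 := ℝ) (hasDerivAt_const s y)
      simpa using h
    have hdF' : ∀ s, HasDerivAt (fun r => ⟪u' r - W' r, y⟫)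
        (-(ω k * ⟪u s - W s, y⟫) - (2*β) * ⟪u' s - W' s, y⟫) s := by
      intro s
      have h := ((hu' s).sub (hdW' s)).inner (𝕜 := ℝ) (hasDerivAt_const s y)
      simp only [inner_zero_right, add_zero, zero_add] at h
      convert h using 1
      · rfl
      · rfl
      · rfl
      have hsym1 : ⟪A (u s), y⟫ = ω k * ⟪u s, y⟫ := by
        rw [hsymm _ (hu_dom s) _ hydom, hAy, real_inner_smul_right]
      have hWy : ω 1 * ⟪W s, y⟫ = ω k * ⟪W s, y⟫ := by
        rcases eq_or_ne k 1 with rfl | hne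
        · rfl
        · have h0 : ⟪W s, y⟫ = 0 := horth 1 k le_rfl hk (Ne.symm hne) (W s) (hWZ s) y hy
          rw [h0]; ring
      simp only [inner_sub_left, inner_neg_left, inner_smul_left, RCLike.star_def, starRingEnd_apply,
        star_trivial]
      linear_combination hsym1 - hWy
    intro s
    exact ode2_zero (2*β) (ω k) _ _ hdF hdF'
      (by simp [hW0]) (by simp [hW'0]) s
  have hkey : ∀ t, u t = W t := by
    intro t
    have hz : u t - W t = 0 := by
      apply Dense.eq_zero_of_inner_right ℝ hdense
      intro y hy
      exact ind_aux Z (fun y => ⟪y, u t - W t⟫ = 0)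
        (fun k hk y hy => by
          show (⟪y, u t - W t⟫ : ℝ) = 0
          rw [real_inner_comm]; exact horthW k hk y hy t)
        (by simp)
        (fun a b ha hb => by
          have ha' : (⟪a, u t - W t⟫ : ℝ) = 0 := ha
          have hb' : (⟪b, u t - W t⟫ : ℝ) = 0 := hb
          show (⟪a + b, u t - W t⟫ : ℝ) = 0
          rw [inner_add_left, ha', hb', add_zero]) y hy
    have := sub_eq_zero.mp hz
    exact this
  have huZ : ∀ t, u t ∈ Z 1 := fun t => (hkey t) ▸ hWZ t
  -- ## part 1
  have part1 : ∀ t : ℝ, u t = Real.exp (-β * t) •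
      (Real.cos (l * t) • u 0 + (Real.sin (l * t) / l) • (u' 0 + β • u 0)) ∧ u t ∈ Z 1 := by
    intro t
    refine ⟨?_, huZ t⟩
    rw [hkey t, hWdef]
    simp only [dcoef1, dcoef2]
    match_scalars <;> ring
  -- ## part 2
  haveI hKproj : Submodule.HasOrthogonalProjection ((Z 1)ᗮ : Submodule ℝ H) :=
    Submodule.HasOrthogonalProjection.ofCompleteSpace _
  set P : H →L[ℝ] H := ((Z 1)ᗮ).subtypeL.comp ((Z 1)ᗮ.orthogonalProjectionOnto) with hPdef
  have hPK : ∀ x ∈ ((Z 1)ᗮ : Submodule ℝ H), P x = x := by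
    intro x hx
    rw [hPdef]
    exact Submodule.starProjection_eq_self_iff.mpr hx
  have hPZ : ∀ x ∈ Z 1, P x = 0 := by
    intro x hx
    have hxk : x ∈ ((Z 1)ᗮ)ᗮ := (Submodule.le_orthogonal_orthogonal (Z 1)) hx
    rw [hPdef]
    simp [Submodule.orthogonalProjectionOnto_apply_of_mem_orthogonal hxk]
  have hv₂P : ∀ t, v₂ t = P (v t) := by
    intro t
    rw [(hsplit t).1, map_add, hPZ _ (hv₁Z t), hPK _ (hv₂Z t), zero_add]
  have hv₂'P : ∀ t, v₂' t = P (v' t) := by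
    intro t
    rw [(hsplit t).2, map_add, hPZ _ (hv₁'Z t), hPK _ (hv₂'Z t), zero_add]
  have hAv₂K : ∀ t, A (v₂ t) ∈ ((Z 1)ᗮ : Submodule ℝ H) := by
    intro t
    rw [Submodule.mem_orthogonal]
    intro y hy
    have hydom : y ∈ dom := (hZ 1 le_rfl y hy).1
    have h1 : ⟪A (v₂ t), y⟫ = ω 1 * ⟪v₂ t, y⟫ := by
      rw [hsymm _ (hv₂dom t) _ hydom, (hZ 1 le_rfl y hy).2, real_inner_smul_right]
    have h2 : ⟪y, v₂ t⟫ = 0 := (Submodule.mem_orthogonal _ _).1 (hv₂Z t) y hy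
    have h3 : ⟪v₂ t, y⟫ = 0 := by rw [real_inner_comm]; exact h2
    rw [real_inner_comm, h1, h3, mul_zero]
  have part2 : ∀ t : ℝ, HasDerivAt v₂' (-A (v₂ t)) t := by
    intro t
    have hfun : v₂' = fun s => P (v' s) := funext hv₂'P
    rw [hfun]
    have h := (P.hasFDerivAt).comp_hasDerivAt t (hv' t)
    convert h using 1
    · rfl
    have hv1dom : v₁ t ∈ dom := (hZ 1 le_rfl _ (hv₁Z t)).1
    have hAv : A (v t) = A (v₁ t) + A (v₂ t) := by
      rw [(hsplit t).1]
      exact (hAadd _ hv1dom _ (hv₂dom t)).2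
    have hAv₁Z : A (v₁ t) ∈ Z 1 := by
      rw [(hZ 1 le_rfl _ (hv₁Z t)).2]
      exact (Z 1).smul_mem _ (hv₁Z t)
    rw [map_sub, map_neg, hAv, map_add, hPZ _ hAv₁Z, hPK _ (hAv₂K t), map_smul,
      hPZ _ (huZ t), zero_add, smul_zero, sub_zero]
  -- ## part 3
  have hge : ∀ t : ℝ, ‖v₂' 0‖^2 + ⟪A (v₂ 0), v₂ 0⟫ ≤ ‖v₂' t‖^2 + ⟪A (v₂ t), v₂ t⟫ :=
    energy_ge dom A ω Z hω_mono hω_pos hZ hdense hlin hsymm hcoer v₂ v₂' hv₂dom hdv₂ part2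
  have hge2 : ∀ t0 : ℝ, ‖v₂' t0‖^2 + ⟪A (v₂ t0), v₂ t0⟫ ≤ ‖v₂' 0‖^2 + ⟪A (v₂ 0), v₂ 0⟫ := by
    intro t0
    have d1 : ∀ τ : ℝ, HasDerivAt (fun τ => v₂ (t0 + τ)) (v₂' (t0 + τ)) τ := by
      intro τ
      have h := (hdv₂ (t0+τ)).scomp τ ((hasDerivAt_id τ).const_add t0)
      simpa [Function.comp_def] using h
    have d2 : ∀ τ : ℝ, HasDerivAt (fun τ => v₂' (t0 + τ)) (-A (v₂ (t0 + τ))) τ := by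
      intro τ
      have h := (part2 (t0+τ)).scomp τ ((hasDerivAt_id τ).const_add t0)
      simpa [Function.comp_def] using h
    have h := energy_ge dom A ω Z hω_mono hω_pos hZ hdense hlin hsymm hcoer
      (fun τ => v₂ (t0 + τ)) (fun τ => v₂' (t0 + τ)) (fun τ => hv₂dom _) d1 d2 (-t0)
    simpa using h
  have hqeq : ∀ t : ℝ, ‖v₂' t‖^2 + ⟪A (v₂ t), v₂ t⟫ = ‖v₂' 0‖^2 + ⟪A (v₂ 0), v₂ 0⟫ :=
    fun t => le_antisymm (hge2 t) (hge t)
  refine ⟨fun t _ => part1 t, part2, fun t _ => by rw [hqeq t], ?_⟩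
  -- ## part 4
  intro hne t ht
  have hnz : v₂ 0 ≠ 0 ∨ v₂' 0 ≠ 0 := by
    rcases hne with h | h
    · left; intro h0; apply h; rw [(hsplit 0).1, h0, add_zero]; exact hv₁Z 0
    · right; intro h0; apply h; rw [(hsplit 0).2, h0, add_zero]; exact hv₁'Z 0
  have h1 : 0 ≤ ⟪A (v₂ 0), v₂ 0⟫ := le_trans (by positivity) (hcoer _ (hv₂dom 0))
  have hq0 : 0 < ‖v₂' 0‖^2 + ⟪A (v₂ 0), v₂ 0⟫ := by
    rcases hnz with h | h
    · have h2 : 0 < ω 1 * ‖v₂ 0‖^2 :=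
        mul_pos hω_pos (pow_pos (norm_pos_iff.mpr h) 2)
      have h3 := hcoer _ (hv₂dom 0)
      nlinarith [sq_nonneg ‖v₂' 0‖]
    · have h2 : 0 < ‖v₂' 0‖^2 := pow_pos (norm_pos_iff.mpr h) 2
      linarith
  rw [hqeq t]
  linarith
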